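/- arXiv:1106.5728 — 5 statements merged into one kernel-verified Lean document; each statement's English description precedes it below -/
import Mathlib

section
/- Let Λ be a finite set, h > 0, p a probability measure on Λ, and let U_h := {x ∈ Λ : p(x) ≥ h} with |U_h| = n. Let W : Λ → [0,∞), and let x_1, x_2, … be an enumeration of Λ such that W(x_1) ≤ W(x_2) ≤ ⋯. Write m := ⌊ h^{-1} · ∑_{x ∉ U_h} p(x) ⌋ (assume ∑_{x∉U_h} p(x) ≥ h and that the points x_{n+1},…,x_{n+m} all lie outside U_h, say by ordering so that U_h = {x_1,…,x_n}). Then ∑_{x ∈ U_h^c} p(x) W(x) ≥ h · ∑_{j=1}^{m} W(x_{n+j}). -/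
/-- Lemma 3.9 ('lem227'): if `x` enumerates `Λ` with `W` increasing, the level set
`U = {y ∈ Λ : p y ≥ h}` consists of the first `n` points, and the mass outside `U` is at
least `h`, then `∑_{y ∈ Λ \ U} p y * W y ≥ h * ∑_{j<m} W (x (n+j))`,
where `m = ⌊h⁻¹ * ∑_{y ∈ Λ \ U} p y⌋`. -/
theorem stmt_3 {α : Type*} [DecidableEq α] (Λ : Finset α) (p W : α → ℝ) (h : ℝ)
    (hh : 0 < h)
    (hW0 : ∀ y ∈ Λ, 0 ≤ W y)
    (hp0 : ∀ y, 0 ≤ p y) (hp1 : ∑ y ∈ Λ, p y = 1)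
    (x : ℕ → α)
    (hxmem : ∀ j, j < Λ.card → x j ∈ Λ)
    (hxinj : Set.InjOn x (Set.Iio Λ.card))
    (hxmono : ∀ i j, i ≤ j → j < Λ.card → W (x i) ≤ W (x j))
    (U : Finset α) (hU : U = Λ.filter (fun y => h ≤ p y))
    (n : ℕ) (hn : n = U.card)
    (hord : ∀ j, j < Λ.card → (x j ∈ U ↔ j < n))
    (hmass : h ≤ ∑ y ∈ Λ \ U, p y)
    (m : ℕ) (hm : m = ⌊h⁻¹ * ∑ y ∈ Λ \ U, p y⌋₊)
    (hnm : n + m ≤ Λ.card) :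
    h * ∑ j ∈ Finset.range m, W (x (n + j)) ≤ ∑ y ∈ Λ \ U, p y * W y := by
  have hN : Finset.image x (Finset.range Λ.card) = Λ := by
    apply Finset.eq_of_subset_of_card_le
    · intro y hy
      simp only [Finset.mem_image, Finset.mem_range] at hy
      obtain ⟨j, hj, rfl⟩ := hy
      exact hxmem j hj
    · rw [Finset.card_image_of_injOn]
      · simp
      · intro a ha b hb hab
        exact hxinj (by simpa using ha) (by simpa using hb) hab
  have hdiff : Λ \ U = Finset.image x (Finset.Ico n Λ.card) := by
    ext y
    simp only [Finset.mem_sdiff, Finset.mem_image, Finset.mem_Ico]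
    constructor
    · rintro ⟨hyΛ, hyU⟩
      rw [← hN] at hyΛ
      simp only [Finset.mem_image, Finset.mem_range] at hyΛ
      obtain ⟨j, hj, rfl⟩ := hyΛ
      refine ⟨j, ⟨?_, hj⟩, rfl⟩
      by_contra hlt
      exact hyU ((hord j hj).2 (lt_of_not_ge hlt))
    · rintro ⟨j, ⟨hnj, hj⟩, rfl⟩
      exact ⟨hxmem j hj, fun hU' => absurd ((hord j hj).1 hU') (not_lt.2 hnj)⟩
  have hsum : ∀ f : α → ℝ, ∑ y ∈ Λ \ U, f y = ∑ k ∈ Finset.Ico n Λ.card, f (x k) := by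
    intro f
    rw [hdiff, Finset.sum_image]
    intro a ha b hb hab
    exact hxinj (Set.mem_Iio.2 (Finset.mem_Ico.1 ha).2) (Set.mem_Iio.2 (Finset.mem_Ico.1 hb).2) hab
  rcases Nat.eq_zero_or_pos m with hm0 | hmpos
  · subst hm0
    simp only [Finset.range_zero, Finset.sum_empty, mul_zero]
    apply Finset.sum_nonneg
    intro y hy
    exact mul_nonneg (hp0 y) (hW0 y (Finset.mem_sdiff.1 hy).1)
  · -- main case
    have hmN : n + m - 1 < Λ.card := by omega
    set c := W (x (n + m - 1)) with hc
    have hc0 : 0 ≤ c := hW0 _ (hxmem _ hmN)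
    set S := ∑ k ∈ Finset.Ico n (n + m), p (x k) * W (x k) with hS
    set T := ∑ k ∈ Finset.Ico (n + m) Λ.card, p (x k) * W (x k) with hT
    set P := ∑ k ∈ Finset.Ico n (n + m), p (x k) with hP
    set Q := ∑ k ∈ Finset.Ico (n + m) Λ.card, p (x k) with hQ
    set R := ∑ k ∈ Finset.Ico n (n + m), W (x k) with hR
    have hA : 0 ≤ S - h * R - c * P + (m : ℝ) * (h * c) := by
      have hterm : ∀ k ∈ Finset.Ico n (n + m), 0 ≤ (p (x k) - h) * (W (x k) - c) := by
        intro k hk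
        obtain ⟨hk1, hk2⟩ := Finset.mem_Ico.1 hk
        have hkN : k < Λ.card := lt_of_lt_of_le hk2 hnm
        have hp_lt : p (x k) ≤ h := by
          have hxU : x k ∉ U := fun hU' => absurd ((hord k hkN).1 hU') (not_lt.2 hk1)
          rw [hU] at hxU
          simp only [Finset.mem_filter, not_and, not_le] at hxU
          exact le_of_lt (hxU (hxmem k hkN))
        have hWle : W (x k) ≤ c := hxmono k (n + m - 1) (by omega) hmN
        nlinarith
      have h1 := Finset.sum_nonneg hterm
      have expand : ∑ k ∈ Finset.Ico n (n + m), (p (x k) - h) * (W (x k) - c)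
          = S - h * R - c * P + (m : ℝ) * (h * c) := by
        have : ∀ k ∈ Finset.Ico n (n + m), (p (x k) - h) * (W (x k) - c)
            = p (x k) * W (x k) - h * W (x k) - c * p (x k) + h * c := by
          intro k _; ring
        rw [Finset.sum_congr rfl this]
        simp only [Finset.sum_add_distrib, Finset.sum_sub_distrib, Finset.sum_const,
          Nat.card_Ico, Nat.add_sub_cancel_left, nsmul_eq_mul, ← Finset.mul_sum, ← hS, ← hR, ← hP]
      linarith [expand ▸ h1]
    have hB : 0 ≤ T - c * Q := by
      have hterm : ∀ k ∈ Finset.Ico (n + m) Λ.card, 0 ≤ p (x k) * (W (x k) - c) := by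
        intro k hk
        obtain ⟨hk1, hk2⟩ := Finset.mem_Ico.1 hk
        have hWge : c ≤ W (x k) := hxmono (n + m - 1) k (by omega) hk2
        exact mul_nonneg (hp0 _) (by linarith)
      have h1 := Finset.sum_nonneg hterm
      have expand : ∑ k ∈ Finset.Ico (n + m) Λ.card, p (x k) * (W (x k) - c)
          = T - c * Q := by
        simp only [mul_sub, Finset.sum_sub_distrib, ← hT]
        congr 1
        rw [Finset.mul_sum]
        exact Finset.sum_congr rfl fun k _ => mul_comm _ _
      linarith [expand ▸ h1]
    have hsplit : ∀ f : α → ℝ, ∑ k ∈ Finset.Ico n Λ.card, f (x k)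
        = ∑ k ∈ Finset.Ico n (n + m), f (x k) + ∑ k ∈ Finset.Ico (n + m) Λ.card, f (x k) := by
      intro f
      exact (Finset.sum_Ico_consecutive _ (by omega) hnm).symm
    have hM : h * (m : ℝ) ≤ P + Q := by
      have hMeq : ∑ y ∈ Λ \ U, p y = P + Q := by rw [hsum p, hsplit]
      have hMpos : (0 : ℝ) ≤ h⁻¹ * ∑ y ∈ Λ \ U, p y := by
        have : (0 : ℝ) < ∑ y ∈ Λ \ U, p y := lt_of_lt_of_le hh hmass
        positivity
      have hfl : (m : ℝ) ≤ h⁻¹ * ∑ y ∈ Λ \ U, p y := by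
        rw [hm]; exact Nat.floor_le hMpos
      have h2 : h * (m : ℝ) ≤ h * (h⁻¹ * ∑ y ∈ Λ \ U, p y) :=
        mul_le_mul_of_nonneg_left hfl (le_of_lt hh)
      rw [← mul_assoc, mul_inv_cancel₀ (ne_of_gt hh), one_mul, hMeq] at h2
      exact h2
    have hRrange : ∑ j ∈ Finset.range m, W (x (n + j)) = R := by
      rw [hR, Finset.sum_Ico_eq_sum_range]
      simp
    rw [hRrange, hsum (fun y => p y * W y), hsplit (fun y => p y * W y), ← hS, ← hT]
    have hck := mul_le_mul_of_nonneg_left hM hc0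
    nlinarith [hA, hB, hck]
end

section
/- Let Λ ⊂ ℤ^d be finite, p a probability measure on Λ, h > 0, and U_h := {x : p(x) ≥ h}. Define p_h(x) := (√p(x) − √h)² for x ∈ U_h and p_h(x) := 0 otherwise. Then the Dirichlet energy forms satisfy (√p, −Δ_Λ^D √p) ≥ (√p_h, −Δ_{U_h}^D √p_h), where (f, −Δ_U^D f) = (1/2) ∑_{x,y ∈ U, |x−y|=1} (f(x) − f(y))² + ∑_{x ∈ U} ∑_{y ∉ U, |x−y|=1} f(x)². -/
/-- The lattice neighbor `x ± e_i` of `x ∈ ℤ^d`. -/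
def nbr {d : ℕ} (x : Fin d → ℤ) (i : Fin d) (s : Bool) : Fin d → ℤ :=
  Function.update x i (x i + if s then 1 else -1)

/-- The Dirichlet quadratic form of the discrete Laplacian on a finite set `U ⊂ ℤ^d`:
`(f, -Δ_U^D f) = (1/2) ∑_{x,y ∈ U, |x-y|=1} (f x - f y)² + ∑_{x ∈ U} ∑_{y ∉ U, |x-y|=1} (f x)²`. -/
noncomputable def dEnergy {d : ℕ} (U : Finset (Fin d → ℤ)) (f : (Fin d → ℤ) → ℝ) : ℝ :=
  (1/2) * (∑ x ∈ U, ∑ i : Fin d, ∑ s : Bool,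
      if nbr x i s ∈ U then (f x - f (nbr x i s)) ^ 2 else 0)
    + ∑ x ∈ U, ∑ i : Fin d, ∑ s : Bool,
      if nbr x i s ∈ U then 0 else (f x) ^ 2


lemma nbr_nbr {d : ℕ} (x : Fin d → ℤ) (i : Fin d) (s : Bool) :
    nbr (nbr x i s) i (!s) = x := by
  unfold nbr
  cases s <;> simp [Function.update_idem, Function.update_self]

lemma nbr_inj {d : ℕ} {x y : Fin d → ℤ} {i : Fin d} {s : Bool}
    (hxy : nbr x i s = nbr y i s) : x = y := by
  have := congrArg (fun z => nbr z i (!s)) hxy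
  simpa [nbr_nbr] using this

lemma dEnergy_eq {d : ℕ} (U : Finset (Fin d → ℤ)) (f : (Fin d → ℤ) → ℝ)
    (hf : ∀ x ∉ U, f x = 0) :
    dEnergy U f = ∑ x ∈ U, ∑ i : Fin d, ∑ s : Bool,
      ((1/2) * (f x - f (nbr x i s)) ^ 2
        + if nbr x i s ∈ U then 0 else (1/2) * f x ^ 2) := by
  unfold dEnergy
  rw [Finset.mul_sum, ← Finset.sum_add_distrib]
  refine Finset.sum_congr rfl fun x hx => ?_
  rw [Finset.mul_sum, ← Finset.sum_add_distrib]
  refine Finset.sum_congr rfl fun i _ => ?_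
  rw [Finset.mul_sum, ← Finset.sum_add_distrib]
  refine Finset.sum_congr rfl fun s _ => ?_
  by_cases hy : nbr x i s ∈ U
  · simp [hy]
  · simp only [hy, if_false, if_neg, hf _ hy]
    ring

/-- Lemma 3.10 ('lem226'): for a probability measure `p` on a finite `Λ ⊂ ℤ^d`, `h > 0`,
level set `U_h = {x : p x ≥ h}` and `p_h x = (√(p x) - √h)²` on `U_h` (zero otherwise),
the Dirichlet energies satisfy `(√p, -Δ_Λ^D √p) ≥ (√p_h, -Δ_{U_h}^D √p_h)`. -/
theorem stmt_5 {d : ℕ} (Λ : Finset (Fin d → ℤ)) (p : (Fin d → ℤ) → ℝ) (h : ℝ)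
    (hh : 0 < h)
    (hp0 : ∀ x, 0 ≤ p x) (hpsupp : ∀ x ∉ Λ, p x = 0) (hp1 : ∑ x ∈ Λ, p x = 1)
    (U : Finset (Fin d → ℤ)) (hU : U = Λ.filter (fun x => h ≤ p x))
    (ph : (Fin d → ℤ) → ℝ)
    (hph : ∀ x, ph x = if x ∈ U then (Real.sqrt (p x) - Real.sqrt h) ^ 2 else 0) :
    dEnergy U (fun x => Real.sqrt (ph x)) ≤ dEnergy Λ (fun x => Real.sqrt (p x)) := by
  classical
  set c := Real.sqrt h with hc
  set f : (Fin d → ℤ) → ℝ := fun x => Real.sqrt (p x) with hfdef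
  set g : (Fin d → ℤ) → ℝ := fun x => Real.sqrt (ph x) with hgdef
  have hUsub : U ⊆ Λ := by rw [hU]; exact Finset.filter_subset _ _
  have hc0 : 0 ≤ c := Real.sqrt_nonneg h
  have hf0 : ∀ x, 0 ≤ f x := fun x => Real.sqrt_nonneg _
  have hfz : ∀ x ∉ Λ, f x = 0 := fun x hx => by simp [hfdef, hpsupp x hx]
  have hg : ∀ x, g x = max (f x - c) 0 := by
    intro x
    by_cases hx : x ∈ U
    · have hpx : h ≤ p x := by rw [hU] at hx; exact (Finset.mem_filter.mp hx).2
      have hfx : c ≤ f x := Real.sqrt_le_sqrt hpx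
      simp only [hgdef, hph x, if_pos hx]
      rw [Real.sqrt_sq (by linarith), max_eq_left (by linarith)]
    · have hpx : p x ≤ h := by
        by_cases hxΛ : x ∈ Λ
        · by_contra hcon; push_neg at hcon
          exact hx (hU ▸ Finset.mem_filter.mpr ⟨hxΛ, le_of_lt hcon⟩)
        · rw [hpsupp x hxΛ]; exact le_of_lt hh
      have hfx : f x ≤ c := Real.sqrt_le_sqrt hpx
      simp only [hgdef, hph x, if_neg hx, Real.sqrt_zero]
      rw [max_eq_right (by linarith)]
  have hgz : ∀ x ∉ U, g x = 0 := fun x hx => by simp [hgdef, hph x, hx]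
  have hg0 : ∀ x, 0 ≤ g x := fun x => Real.sqrt_nonneg _
  have hgle : ∀ x, g x ≤ f x := by
    intro x; rw [hg x]; exact max_le (by linarith [hc0]) (hf0 x)
  have hlip : ∀ x y, (g x - g y) ^ 2 ≤ (f x - f y) ^ 2 := by
    intro x y
    have h1 : |g x - g y| ≤ |f x - f y| := by
      rw [hg x, hg y]
      have := abs_max_sub_max_le_abs (f x - c) (f y - c) 0
      simpa using this
    calc (g x - g y) ^ 2 = |g x - g y| ^ 2 := (sq_abs _).symm
      _ ≤ |f x - f y| ^ 2 := pow_le_pow_left₀ (abs_nonneg _) h1 2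
      _ = (f x - f y) ^ 2 := sq_abs _
  rw [dEnergy_eq U _ hgz, dEnergy_eq Λ _ hfz]
  -- the Λ-boundary-condition energy of g, summed over a set V
  set Qg : (Fin d → ℤ) → ℝ := fun x => ∑ i : Fin d, ∑ s : Bool,
      ((1/2) * (g x - g (nbr x i s)) ^ 2
        + if nbr x i s ∈ Λ then 0 else (1/2) * g x ^ 2) with hQg
  set E : ℝ := ∑ x ∈ U, ∑ i : Fin d, ∑ s : Bool,
      (if nbr x i s ∈ Λ \ U then (1/2) * g x ^ 2 else 0) with hE
  have split1 : ∑ x ∈ U, ∑ i : Fin d, ∑ s : Bool,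
      ((1/2) * (g x - g (nbr x i s)) ^ 2
        + if nbr x i s ∈ U then 0 else (1/2) * g x ^ 2)
      = (∑ x ∈ U, Qg x) + E := by
    rw [hE, ← Finset.sum_add_distrib]
    refine Finset.sum_congr rfl fun x hx => ?_
    rw [hQg, ← Finset.sum_add_distrib]
    refine Finset.sum_congr rfl fun i _ => ?_
    rw [← Finset.sum_add_distrib]
    refine Finset.sum_congr rfl fun s _ => ?_
    by_cases hyU : nbr x i s ∈ U
    · have hyΛ : nbr x i s ∈ Λ := hUsub hyU
      simp [hyU, hyΛ, Finset.mem_sdiff]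
    · by_cases hyΛ : nbr x i s ∈ Λ
      · simp [hyU, hyΛ, Finset.mem_sdiff]
      · simp [hyU, hyΛ, Finset.mem_sdiff]
  have step2 : E ≤ ∑ x ∈ Λ \ U, ∑ i : Fin d, ∑ s : Bool, (1/2) * g (nbr x i s) ^ 2 := by
    -- reindex via the edge-reversal involution
    rw [hE]
    have lhs_eq : ∑ x ∈ U, ∑ i : Fin d, ∑ s : Bool,
        (if nbr x i s ∈ Λ \ U then (1/2) * g x ^ 2 else 0)
        = ∑ q ∈ (U ×ˢ (Finset.univ : Finset (Fin d × Bool))).filter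
            (fun q => nbr q.1 q.2.1 q.2.2 ∈ Λ \ U), (1/2) * g q.1 ^ 2 := by
      rw [Finset.sum_filter, Finset.sum_product]
      refine Finset.sum_congr rfl fun x _ => ?_
      rw [Fintype.sum_prod_type]
    have rhs_eq : ∑ x ∈ Λ \ U, ∑ i : Fin d, ∑ s : Bool, (1/2) * g (nbr x i s) ^ 2
        = ∑ q ∈ ((Λ \ U) ×ˢ (Finset.univ : Finset (Fin d × Bool))),
            (1/2) * g (nbr q.1 q.2.1 q.2.2) ^ 2 := by
      rw [Finset.sum_product]
      refine Finset.sum_congr rfl fun x _ => ?_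
      rw [Fintype.sum_prod_type]
    rw [lhs_eq, rhs_eq]
    set e : (Fin d → ℤ) × (Fin d × Bool) → (Fin d → ℤ) × (Fin d × Bool) :=
      fun q => (nbr q.1 q.2.1 q.2.2, (q.2.1, !q.2.2)) with he
    have hinj : ∀ q₁ ∈ (U ×ˢ (Finset.univ : Finset (Fin d × Bool))).filter
            (fun q => nbr q.1 q.2.1 q.2.2 ∈ Λ \ U), ∀ q₂ ∈ (U ×ˢ (Finset.univ : Finset (Fin d × Bool))).filter
            (fun q => nbr q.1 q.2.1 q.2.2 ∈ Λ \ U), e q₁ = e q₂ → q₁ = q₂ := by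
      rintro ⟨x₁, i₁, s₁⟩ - ⟨x₂, i₂, s₂⟩ - hq
      simp only [he, Prod.mk.injEq] at hq
      obtain ⟨h1, h2, h3⟩ := hq
      subst h2
      have hs : s₁ = s₂ := Bool.not_inj h3
      subst hs
      have hx := nbr_inj h1
      subst hx
      rfl
    calc ∑ q ∈ (U ×ˢ (Finset.univ : Finset (Fin d × Bool))).filter
            (fun q => nbr q.1 q.2.1 q.2.2 ∈ Λ \ U), (1/2) * g q.1 ^ 2
        = ∑ q ∈ ((U ×ˢ (Finset.univ : Finset (Fin d × Bool))).filter
            (fun q => nbr q.1 q.2.1 q.2.2 ∈ Λ \ U)).image e,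
            (1/2) * g (nbr q.1 q.2.1 q.2.2) ^ 2 := by
          rw [Finset.sum_image hinj]
          refine Finset.sum_congr rfl fun q hq => ?_
          simp only [he]
          rw [nbr_nbr]
      _ ≤ ∑ q ∈ ((Λ \ U) ×ˢ (Finset.univ : Finset (Fin d × Bool))),
            (1/2) * g (nbr q.1 q.2.1 q.2.2) ^ 2 := by
          refine Finset.sum_le_sum_of_subset_of_nonneg ?_ fun q _ _ => by positivity
          intro q hq
          simp only [Finset.mem_image] at hq
          obtain ⟨r, hr, hrq⟩ := hq
          simp only [Finset.mem_filter, Finset.mem_product] at hr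
          subst hrq
          simp only [he, Finset.mem_product, Finset.mem_univ, and_true]
          exact hr.2
  have step3 : ∑ x ∈ Λ \ U, ∑ i : Fin d, ∑ s : Bool, (1/2) * g (nbr x i s) ^ 2
      = ∑ x ∈ Λ \ U, Qg x := by
    refine Finset.sum_congr rfl fun x hx => ?_
    have hxU : x ∉ U := (Finset.mem_sdiff.mp hx).2
    rw [hQg]
    refine Finset.sum_congr rfl fun i _ => Finset.sum_congr rfl fun s _ => ?_
    rw [hgz x hxU]
    split <;> ring
  have step4 : (∑ x ∈ U, Qg x) + ∑ x ∈ Λ \ U, Qg x = ∑ x ∈ Λ, Qg x := by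
    rw [add_comm, Finset.sum_sdiff hUsub]
  have step5 : ∑ x ∈ Λ, Qg x ≤ ∑ x ∈ Λ, ∑ i : Fin d, ∑ s : Bool,
      ((1/2) * (f x - f (nbr x i s)) ^ 2
        + if nbr x i s ∈ Λ then 0 else (1/2) * f x ^ 2) := by
    refine Finset.sum_le_sum fun x _ => ?_
    rw [hQg]
    refine Finset.sum_le_sum fun i _ => Finset.sum_le_sum fun s _ => ?_
    refine add_le_add (by nlinarith [hlip x (nbr x i s)]) ?_
    split
    · exact le_rfl
    · nlinarith [hgle x, hg0 x, hf0 x]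
  calc ∑ x ∈ U, ∑ i : Fin d, ∑ s : Bool,
      ((1/2) * (g x - g (nbr x i s)) ^ 2
        + if nbr x i s ∈ U then 0 else (1/2) * g x ^ 2)
      = (∑ x ∈ U, Qg x) + E := split1
    _ ≤ (∑ x ∈ U, Qg x) + ∑ x ∈ Λ \ U, Qg x := by
        refine add_le_add_right (le_trans step2 (le_of_eq step3)) _
    _ = ∑ x ∈ Λ, Qg x := step4
    _ ≤ _ := step5
end

section
/- Let Λ ⊂ ℤ^d be a finite box, p a probability measure on Λ with level set U_h(p) = {x : p(x) ≥ h} of cardinality n, and suppose the Dirichlet energy satisfies (√p, −Δ_Λ^D √p) ≤ γ sin²(π/(2ℓ)) for some ℓ ≥ 2 and γ > 0. Assume the Faber–Krahn inequality E₁(−Δ_U^D) ≥ c_FK |U|^{−2/d} for all finite U ⊂ ℤ^d. Then the mass outside the level set satisfies ∑_{x ∉ U_h(p)} p(x) ≥ 1 − ( (γπ²/(4 c_FK))^{1/2} n^{1/d} ℓ^{−1} + (hn)^{1/2} )². -/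
namespace Peak

variable {d : ℕ}

noncomputable def eterm (W : Finset (Fin d → ℤ)) (f : (Fin d → ℤ) → ℝ)
    (t : (Fin d → ℤ) × Fin d × Bool) : ℝ :=
  if nbr t.1 t.2.1 t.2.2 ∈ W then (1/2) * (f t.1 - f (nbr t.1 t.2.1 t.2.2)) ^ 2
  else (f t.1) ^ 2

lemma eterm_nonneg (W : Finset (Fin d → ℤ)) (f : (Fin d → ℤ) → ℝ) (t) :
    0 ≤ eterm W f t := by
  unfold eterm; split <;> positivity

noncomputable def S (W : Finset (Fin d → ℤ)) : Finset ((Fin d → ℤ) × Fin d × Bool) :=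
  W ×ˢ (Finset.univ ×ˢ Finset.univ)

lemma mem_S {W : Finset (Fin d → ℤ)} {t : (Fin d → ℤ) × Fin d × Bool} :
    t ∈ S W ↔ t.1 ∈ W := by
  simp [S, Finset.mem_product]

lemma dEnergy_eq (W : Finset (Fin d → ℤ)) (f : (Fin d → ℤ) → ℝ) :
    dEnergy W f = ∑ t ∈ S W, eterm W f t := by
  unfold dEnergy S
  rw [Finset.sum_product]
  simp only [Finset.sum_product]
  rw [Finset.mul_sum, ← Finset.sum_add_distrib]
  refine Finset.sum_congr rfl fun x _ => ?_
  rw [Finset.mul_sum, ← Finset.sum_add_distrib]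
  refine Finset.sum_congr rfl fun i _ => ?_
  rw [Finset.mul_sum, ← Finset.sum_add_distrib]
  refine Finset.sum_congr rfl fun s _ => ?_
  unfold eterm
  split <;> ring

def flip (t : (Fin d → ℤ) × Fin d × Bool) : (Fin d → ℤ) × Fin d × Bool :=
  (nbr t.1 t.2.1 t.2.2, t.2.1, !t.2.2)

lemma nbr_nbr (x : Fin d → ℤ) (i : Fin d) (s : Bool) : nbr (nbr x i s) i (!s) = x := by
  unfold nbr
  rw [Function.update_idem, Function.update_self]
  cases s <;> simp

lemma flip_flip (t : (Fin d → ℤ) × Fin d × Bool) : flip (flip t) = t := by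
  cases t with
  | mk x p =>
    cases p with
    | mk i s => simp [flip, nbr_nbr]

lemma flip_inj : Function.Injective (flip (d := d)) := fun a b hab => by
  rw [← flip_flip a, hab, flip_flip]

lemma energy_mono (Λ U : Finset (Fin d → ℤ)) (hUΛ : U ⊆ Λ)
    (f : (Fin d → ℤ) → ℝ) (c : ℝ) (hc : 0 ≤ c) (hf : ∀ x, 0 ≤ f x)
    (hcf : ∀ x ∈ U, c ≤ f x) (hfc : ∀ x ∈ Λ, x ∉ U → f x ≤ c) :
    dEnergy U (fun x => f x - c) ≤ dEnergy Λ f := by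
  classical
  rw [dEnergy_eq, dEnergy_eq]
  set g : (Fin d → ℤ) → ℝ := fun x => f x - c with hg
  set D : ((Fin d → ℤ) × Fin d × Bool) → ℝ :=
    fun t => if nbr t.1 t.2.1 t.2.2 ∈ Λ \ U then eterm Λ f (flip t) else 0 with hD
  have key : ∀ t ∈ S U, eterm U g t ≤ eterm Λ f t + D t := by
    intro t ht
    rw [mem_S] at ht
    have hD0 : (0:ℝ) ≤ D t := by
      rw [hD]; dsimp only; split
      · exact eterm_nonneg _ _ _
      · exact le_rfl
    by_cases hyU : nbr t.1 t.2.1 t.2.2 ∈ U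
    · have hyΛ : nbr t.1 t.2.1 t.2.2 ∈ Λ := hUΛ hyU
      have heq : eterm U g t = eterm Λ f t := by
        unfold eterm
        rw [if_pos hyU, if_pos hyΛ]
        simp only [hg]
        ring
      linarith
    · by_cases hyΛ : nbr t.1 t.2.1 t.2.2 ∈ Λ
      · have h1 : eterm U g t = (f t.1 - c) ^ 2 := by
          unfold eterm; rw [if_neg hyU]
        have h2 : eterm Λ f t = (1/2) * (f t.1 - f (nbr t.1 t.2.1 t.2.2)) ^ 2 := by
          unfold eterm; rw [if_pos hyΛ]
        have h3 : eterm Λ f (flip t) = (1/2) * (f (nbr t.1 t.2.1 t.2.2) - f t.1) ^ 2 := by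
          unfold eterm flip
          dsimp only
          rw [nbr_nbr, if_pos (hUΛ ht)]
        have hDt : D t = (1/2) * (f (nbr t.1 t.2.1 t.2.2) - f t.1) ^ 2 := by
          rw [hD]; dsimp only
          rw [if_pos (Finset.mem_sdiff.2 ⟨hyΛ, hyU⟩), h3]
        rw [h1, h2, hDt]
        have hxc : c ≤ f t.1 := hcf _ ht
        have hyc : f (nbr t.1 t.2.1 t.2.2) ≤ c := hfc _ hyΛ hyU
        nlinarith [mul_nonneg (sub_nonneg.2 hyc)
          (by linarith : (0:ℝ) ≤ 2 * f t.1 - c - f (nbr t.1 t.2.1 t.2.2))]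
      · have h1 : eterm U g t = (f t.1 - c) ^ 2 := by
          unfold eterm; rw [if_neg hyU]
        have h2 : eterm Λ f t = (f t.1) ^ 2 := by
          unfold eterm; rw [if_neg hyΛ]
        rw [h1, h2]
        have hxc : c ≤ f t.1 := hcf _ ht
        have hDt : D t = 0 := by
          rw [hD]; dsimp only
          rw [if_neg (fun hmem => hyΛ (Finset.mem_sdiff.1 hmem).1)]
        rw [hDt]
        nlinarith [mul_nonneg hc (hf t.1), mul_nonneg hc (sub_nonneg.2 hxc)]
  have step1 : ∑ t ∈ S U, eterm U g t ≤ ∑ t ∈ S U, (eterm Λ f t + D t) :=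
    Finset.sum_le_sum key
  rw [Finset.sum_add_distrib] at step1
  have step2 : ∑ t ∈ S U, D t ≤ ∑ t ∈ S (Λ \ U), eterm Λ f t := by
    have h1 : ∑ t ∈ S U, D t
        = ∑ t ∈ (S U).filter (fun t => nbr t.1 t.2.1 t.2.2 ∈ Λ \ U),
            eterm Λ f (flip t) := by
      rw [Finset.sum_filter]
    have h2 : ∑ t ∈ (S U).filter (fun t => nbr t.1 t.2.1 t.2.2 ∈ Λ \ U),
          eterm Λ f (flip t)
        = ∑ u ∈ ((S U).filter (fun t => nbr t.1 t.2.1 t.2.2 ∈ Λ \ U)).image flip,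
            eterm Λ f u :=
      (Finset.sum_image (fun a _ b _ hab => flip_inj hab)).symm
    rw [h1, h2]
    apply Finset.sum_le_sum_of_subset_of_nonneg
    · intro u hu
      obtain ⟨t, ht, rfl⟩ := Finset.mem_image.1 hu
      rw [Finset.mem_filter] at ht
      rw [mem_S]
      exact ht.2
    · intro t _ _
      exact eterm_nonneg _ _ _
  have hdisj : Disjoint (S U) (S (Λ \ U)) := by
    rw [Finset.disjoint_left]
    intro t ht ht'
    rw [mem_S] at ht ht'
    exact (Finset.mem_sdiff.1 ht').2 ht
  have hsplit : ∑ t ∈ S U, eterm Λ f t + ∑ t ∈ S (Λ \ U), eterm Λ f t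
      = ∑ t ∈ S Λ, eterm Λ f t := by
    rw [← Finset.sum_union hdisj]
    congr 1
    unfold S
    rw [← Finset.union_product, Finset.union_sdiff_of_subset hUΛ]
  linarith

end Peak

set_option maxHeartbeats 1000000 in
/-- Corollary 3.12 ('peakmasse'): under the Faber–Krahn inequality
`E₁(-Δ_U^D) ≥ c_FK |U|^{-2/d}` (stated variationally), if the Dirichlet energy of `√p`
is at most `γ sin²(π/(2ℓ))` for some `ℓ ≥ 2`, then the mass outside the level set
`U_h(p)` of cardinality `n` satisfies
`∑_{x ∉ U_h(p)} p x ≥ 1 - ((γπ²/(4 c_FK))^{1/2} n^{1/d} ℓ⁻¹ + (hn)^{1/2})²`. -/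
theorem stmt_8 {d : ℕ} (hd : 1 ≤ d) (Λ : Finset (Fin d → ℤ))
    (p : (Fin d → ℤ) → ℝ)
    (hp0 : ∀ x, 0 ≤ p x) (hpsupp : ∀ x ∉ Λ, p x = 0) (hp1 : ∑ x ∈ Λ, p x = 1)
    (h : ℝ) (hh : 0 < h)
    (U : Finset (Fin d → ℤ)) (hU : U = Λ.filter (fun x => h ≤ p x))
    (n : ℕ) (hn : n = U.card)
    (ℓ : ℕ) (hℓ : 2 ≤ ℓ) (γ cFK : ℝ) (hγ : 0 < γ) (hcFK : 0 < cFK)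
    (hFK : ∀ W : Finset (Fin d → ℤ), W.Nonempty → ∀ f : (Fin d → ℤ) → ℝ,
      cFK * (W.card : ℝ) ^ (-(2:ℝ)/d) * ∑ x ∈ W, (f x) ^ 2 ≤ dEnergy W f)
    (hEnergy : dEnergy Λ (fun x => Real.sqrt (p x))
        ≤ γ * Real.sin (Real.pi / (2 * ℓ)) ^ 2) :
    1 - (Real.sqrt (γ * Real.pi ^ 2 / (4 * cFK)) * (n : ℝ) ^ ((1:ℝ)/d) / ℓ
          + Real.sqrt (h * n)) ^ 2
      ≤ ∑ x ∈ Λ \ U, p x := by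
  classical
  have hUΛ : U ⊆ Λ := by rw [hU]; exact Finset.filter_subset _ _
  rcases Finset.eq_empty_or_nonempty U with hUe | hUne
  · rw [hUe, Finset.sdiff_empty, hp1]
    have := sq_nonneg (Real.sqrt (γ * Real.pi ^ 2 / (4 * cFK)) * (n : ℝ) ^ ((1:ℝ)/d) / ℓ
          + Real.sqrt (h * n))
    linarith
  -- nonempty case
  set f : (Fin d → ℤ) → ℝ := fun x => Real.sqrt (p x) with hf
  set c : ℝ := Real.sqrt h with hcdef
  have hc : 0 ≤ c := Real.sqrt_nonneg _
  have hfnn : ∀ x, 0 ≤ f x := fun x => Real.sqrt_nonneg _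
  have hcf : ∀ x ∈ U, c ≤ f x := by
    intro x hx
    rw [hU, Finset.mem_filter] at hx
    exact Real.sqrt_le_sqrt hx.2
  have hfc : ∀ x ∈ Λ, x ∉ U → f x ≤ c := by
    intro x hxΛ hxU
    have : ¬ h ≤ p x := by
      intro hle
      exact hxU (by rw [hU, Finset.mem_filter]; exact ⟨hxΛ, hle⟩)
    exact Real.sqrt_le_sqrt (le_of_not_ge this)
  have hnpos : 0 < n := by
    rw [hn]
    exact Finset.card_pos.2 hUne
  have hνpos : (0:ℝ) < (n:ℝ) := by exact_mod_cast hnpos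
  have hℓpos : (0:ℝ) < (ℓ:ℝ) := by
    have : 0 < ℓ := lt_of_lt_of_le (by norm_num) hℓ
    exact_mod_cast this
  have hdpos : (0:ℝ) < (d:ℝ) := by
    have : 0 < d := hd
    exact_mod_cast this
  -- energy bound for g
  have hE1 : dEnergy U (fun x => f x - c) ≤ dEnergy Λ f :=
    Peak.energy_mono Λ U hUΛ f c hc hfnn hcf hfc
  have hsin : Real.sin (Real.pi / (2 * ℓ)) ^ 2 ≤ (Real.pi / (2 * ℓ)) ^ 2 :=
    Real.sin_sq_le_sq
  have hE2 : dEnergy U (fun x => f x - c) ≤ γ * (Real.pi / (2 * ℓ)) ^ 2 := by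
    have := mul_le_mul_of_nonneg_left hsin hγ.le
    calc dEnergy U (fun x => f x - c) ≤ dEnergy Λ f := hE1
      _ ≤ γ * Real.sin (Real.pi / (2 * ℓ)) ^ 2 := hEnergy
      _ ≤ γ * (Real.pi / (2 * ℓ)) ^ 2 := this
  -- Faber-Krahn
  set Sg : ℝ := ∑ x ∈ U, (f x - c) ^ 2 with hSg
  have hSgnn : 0 ≤ Sg := Finset.sum_nonneg fun x _ => sq_nonneg _
  have hFKU : cFK * (n : ℝ) ^ (-(2:ℝ)/d) * Sg ≤ γ * (Real.pi / (2 * ℓ)) ^ 2 := by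
    have := hFK U hUne (fun x => f x - c)
    rw [← hn] at this
    exact this.trans hE2
  -- conclude Sg ≤ A²
  set A : ℝ := Real.sqrt (γ * Real.pi ^ 2 / (4 * cFK)) * (n : ℝ) ^ ((1:ℝ)/d) / ℓ with hA
  have hAnn : 0 ≤ A := by
    apply div_nonneg _ hℓpos.le
    exact mul_nonneg (Real.sqrt_nonneg _) (Real.rpow_nonneg hνpos.le _)
  have hrpow_pos : (0:ℝ) < (n : ℝ) ^ ((2:ℝ)/d) := Real.rpow_pos_of_pos hνpos _
  have hA2 : A ^ 2 = γ * Real.pi ^ 2 / (4 * cFK) * (n : ℝ) ^ ((2:ℝ)/d) / (ℓ:ℝ)^2 := by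
    have he : ((1:ℝ)/d) * ((2:ℕ):ℝ) = (2:ℝ)/d := by push_cast; ring
    rw [hA, div_pow, mul_pow, Real.sq_sqrt (by positivity),
      ← Real.rpow_natCast ((n:ℝ) ^ ((1:ℝ)/d)) 2, ← Real.rpow_mul hνpos.le, he]
  have hSgA : Sg ≤ A ^ 2 := by
    have hcne : cFK ≠ 0 := hcFK.ne'
    have hℓne : (ℓ:ℝ) ≠ 0 := hℓpos.ne'
    have hinv : (n : ℝ) ^ (-(2:ℝ)/d) * (n : ℝ) ^ ((2:ℝ)/d) = 1 := by
      rw [← Real.rpow_add hνpos, show (-(2:ℝ)/d + (2:ℝ)/d) = 0 by ring, Real.rpow_zero]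
    have h2 := mul_le_mul_of_nonneg_right hFKU hrpow_pos.le
    have h1 : cFK * Sg ≤ γ * (Real.pi / (2 * ℓ)) ^ 2 * (n : ℝ) ^ ((2:ℝ)/d) := by
      calc cFK * Sg = cFK * Sg * ((n : ℝ) ^ (-(2:ℝ)/d) * (n : ℝ) ^ ((2:ℝ)/d)) := by
            rw [hinv, mul_one]
        _ = cFK * (n : ℝ) ^ (-(2:ℝ)/d) * Sg * (n : ℝ) ^ ((2:ℝ)/d) := by ring
        _ ≤ γ * (Real.pi / (2 * ℓ)) ^ 2 * (n : ℝ) ^ ((2:ℝ)/d) := h2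
    have h4 : Sg ≤ γ * (Real.pi / (2 * ℓ)) ^ 2 * (n : ℝ) ^ ((2:ℝ)/d) / cFK :=
      (le_div_iff₀ hcFK).2 (by linarith [h1])
    rw [hA2]
    calc Sg ≤ γ * (Real.pi / (2 * ℓ)) ^ 2 * (n : ℝ) ^ ((2:ℝ)/d) / cFK := h4
      _ = γ * Real.pi ^ 2 / (4 * cFK) * (n : ℝ) ^ ((2:ℝ)/d) / (ℓ:ℝ)^2 := by
          field_simp
          ring
  -- triangle inequality
  have hsumU : ∑ x ∈ U, p x ≤ (A + Real.sqrt (h * n)) ^ 2 := by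
    have hgU : ∀ x ∈ U, 0 ≤ f x - c := fun x hx => sub_nonneg.2 (hcf x hx)
    have hCS : (∑ x ∈ U, (f x - c)) ^ 2 ≤ (U.card : ℝ) * Sg := by
      simpa [hSg] using sq_sum_le_card_mul_sum_sq (s := U) (f := fun x => f x - c)
    have hsumg : ∑ x ∈ U, (f x - c) ≤ Real.sqrt ((n:ℝ) * Sg) := by
      rw [hn]
      have h0 : 0 ≤ ∑ x ∈ U, (f x - c) := Finset.sum_nonneg hgU
      calc ∑ x ∈ U, (f x - c) = Real.sqrt ((∑ x ∈ U, (f x - c))^2) :=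
            (Real.sqrt_sq h0).symm
        _ ≤ Real.sqrt ((U.card : ℝ) * Sg) := Real.sqrt_le_sqrt hCS
    have hexp : ∑ x ∈ U, p x = Sg + 2 * c * (∑ x ∈ U, (f x - c)) + (n : ℝ) * c^2 := by
      have : ∀ x ∈ U, p x = (f x - c)^2 + 2 * c * (f x - c) + c^2 := by
        intro x hx
        have : f x ^ 2 = p x := Real.sq_sqrt (hp0 x)
        nlinarith [this]
      rw [Finset.sum_congr rfl this, Finset.sum_add_distrib, Finset.sum_add_distrib,
        ← Finset.mul_sum, Finset.sum_const, hn]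
      push_cast
      ring
    have hc2 : c ^ 2 = h := Real.sq_sqrt hh.le
    have hb : Real.sqrt (h * n) ^ 2 = h * n :=
      Real.sq_sqrt (by positivity)
    have hsg : Real.sqrt Sg ^ 2 = Sg := Real.sq_sqrt hSgnn
    have hsqA : Real.sqrt Sg ≤ A := by
      have := Real.sqrt_le_sqrt hSgA
      rwa [Real.sqrt_sq hAnn] at this
    have hmid : c * (∑ x ∈ U, (f x - c)) ≤ Real.sqrt (h * n) * Real.sqrt Sg := by
      have hceq : c * Real.sqrt ((n:ℝ) * Sg) = Real.sqrt (h * n) * Real.sqrt Sg := by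
        rw [hcdef, ← Real.sqrt_mul hh.le, ← mul_assoc,
          Real.sqrt_mul (by positivity : (0:ℝ) ≤ h * (n:ℝ)) Sg]
      calc c * (∑ x ∈ U, (f x - c)) ≤ c * Real.sqrt ((n:ℝ) * Sg) :=
            mul_le_mul_of_nonneg_left hsumg hc
        _ = Real.sqrt (h * n) * Real.sqrt Sg := hceq
    have htri : ∑ x ∈ U, p x ≤ (Real.sqrt Sg + Real.sqrt (h * n)) ^ 2 := by
      rw [hexp]
      nlinarith [hmid, hc2, hb, hsg]
    have hfin : (Real.sqrt Sg + Real.sqrt (h * n)) ^ 2 ≤ (A + Real.sqrt (h * n)) ^ 2 :=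
      pow_le_pow_left₀ (add_nonneg (Real.sqrt_nonneg _) (Real.sqrt_nonneg _))
        (add_le_add_left hsqA _) 2
    linarith
  have hsd : ∑ x ∈ Λ \ U, p x = 1 - ∑ x ∈ U, p x := by
    rw [Finset.sum_sdiff_eq_sub hUΛ, hp1]
  rw [hsd]
  linarith [hsumU]
end

section
/- Let {V(x)}_{x∈Λ} be i.i.d. real random variables on a finite set Λ with G(t) := log E[exp(−tV(0))] < ∞ for t ≥ 0. Fix N ≥ 2 and h ∈ (0, 1/(N−1)). Let x*₁, …, x*_N denote the (random) sites of the N smallest values of V. Then E[ exp( −(1 − h(N−1)) t V(x*₁) − h t ∑_{j=2}^N V(x*_j) ) ] ≤ |Λ| · C(|Λ|, N−1) · exp( G((1 − h(N−1))t) + (N−1) G(ht) ), where C(n,k) is the binomial coefficient. -/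
open MeasureTheory ProbabilityTheory

/-- The union-bound step of Proposition 3.14: for an i.i.d. field `{V x}_{x ∈ Λ}` with
cumulant generating function `G`, if `X ω` is the site of the minimum of `V · ω` on `Λ` and
`W ω` the set of the next `N-1` smallest sites, then for `N ≥ 2`, `h ∈ (0, 1/(N-1))`, `t ≥ 0`,
`E[exp(-(1-h(N-1)) t V(X) - h t ∑_{y ∈ W} V y)]
  ≤ |Λ| ⬝ C(|Λ|, N-1) ⬝ exp(G((1-h(N-1))t) + (N-1) G(ht))`. -/
theorem stmt_10 {Ω α : Type*} [MeasurableSpace Ω] [DecidableEq α] [Fintype α]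
    (μ : Measure Ω) [IsProbabilityMeasure μ]
    (V : α → Ω → ℝ) (hVmeas : ∀ x, Measurable (V x))
    (hindep : iIndepFun V μ)
    (hid : ∀ x y : α, Measure.map (V x) μ = Measure.map (V y) μ)
    (Λ : Finset α) (hΛ : Λ.Nonempty) (x₀ : α) (hx₀ : x₀ ∈ Λ)
    (hInt : ∀ s : ℝ, 0 ≤ s → Integrable (fun ω => Real.exp (-s * V x₀ ω)) μ)
    (G : ℝ → ℝ) (hG : ∀ s : ℝ, G s = Real.log (∫ ω, Real.exp (-s * V x₀ ω) ∂μ))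
    (N : ℕ) (hN : 2 ≤ N) (h t : ℝ) (hh : 0 < h) (hh' : h < 1 / (N - 1 : ℝ)) (ht : 0 ≤ t)
    (X : Ω → α) (W : Ω → Finset α)
    (hXmeas : ∀ x : α, MeasurableSet {ω | X ω = x})
    (hWmeas : ∀ S : Finset α, MeasurableSet {ω | W ω = S})
    -- `X` is the site of the minimum and `W` the set of the next `N-1` smallest sites
    (hsel : ∀ᵐ ω ∂μ, X ω ∈ Λ ∧ W ω ⊆ Λ.erase (X ω) ∧ (W ω).card = N - 1 ∧
      (∀ y ∈ Λ, V (X ω) ω ≤ V y ω) ∧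
      (∀ z ∈ W ω, ∀ y ∈ Λ, y ∉ insert (X ω) (W ω) → V z ω ≤ V y ω)) :
    (∫ ω, Real.exp (-(1 - h * (N - 1 : ℝ)) * t * V (X ω) ω
          - h * t * ∑ y ∈ W ω, V y ω) ∂μ)
      ≤ (Λ.card : ℝ) * (Λ.card.choose (N - 1) : ℝ) *
          Real.exp (G ((1 - h * (N - 1 : ℝ)) * t) + (N - 1 : ℝ) * G (h * t)) := by
  classical
  have hNR : (1:ℝ) ≤ (N:ℝ) - 1 := by
    have : (2:ℝ) ≤ (N:ℝ) := by exact_mod_cast hN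
    linarith
  have hNpos : (0:ℝ) < (N:ℝ) - 1 := by linarith
  set s₁ : ℝ := (1 - h * (N - 1 : ℝ)) * t with hs₁def
  set s₂ : ℝ := h * t with hs₂def
  have h1 : h * ((N:ℝ) - 1) < 1 := by
    have := (lt_div_iff₀ hNpos).mp hh'
    linarith
  have hs₁ : 0 ≤ s₁ := mul_nonneg (by linarith) ht
  have hs₂ : 0 ≤ s₂ := mul_nonneg hh.le ht
  -- key: for every site y and s ≥ 0, integrability and value of the Laplace transform
  have key : ∀ (y : α) (s : ℝ), 0 ≤ s →
      Integrable (fun ω => Real.exp (-s * V y ω)) μ ∧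
      ∫ ω, Real.exp (-s * V y ω) ∂μ = Real.exp (G s) := by
    intro y s hs
    have hgm : Measurable (fun v : ℝ => Real.exp (-s * v)) :=
      (measurable_id.const_mul (-s)).exp
    have hmap := hid y x₀
    have hI0 : Integrable (fun ω => Real.exp (-s * V x₀ ω)) μ := hInt s hs
    have hI0' : Integrable (fun v => Real.exp (-s * v)) (μ.map (V x₀)) := by
      rw [integrable_map_measure hgm.aestronglyMeasurable (hVmeas x₀).aemeasurable]
      exact hI0
    have hIy : Integrable (fun ω => Real.exp (-s * V y ω)) μ := by
      have h2 : Integrable (fun v => Real.exp (-s * v)) (μ.map (V y)) := by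
        rw [hmap]; exact hI0'
      rw [integrable_map_measure hgm.aestronglyMeasurable (hVmeas y).aemeasurable] at h2
      exact h2
    have heq : ∫ ω, Real.exp (-s * V y ω) ∂μ = ∫ ω, Real.exp (-s * V x₀ ω) ∂μ := by
      rw [← integral_map (hVmeas y).aemeasurable hgm.aestronglyMeasurable,
        ← integral_map (hVmeas x₀).aemeasurable hgm.aestronglyMeasurable, hmap]
    have hpos0 : 0 < ∫ ω, Real.exp (-s * V x₀ ω) ∂μ := by
      have hm : (∫ ω, Real.exp (-s * V x₀ ω) ∂μ) = mgf (V x₀) μ (-s) := rfl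
      rw [hm]
      exact mgf_pos hI0
    exact ⟨hIy, by rw [heq, hG s, Real.exp_log hpos0]⟩
  set E : ℝ := Real.exp (G s₁ + ((N:ℝ) - 1) * G s₂) with hEdef
  set P : Finset (α × Finset α) :=
    (Λ ×ˢ Λ.powersetCard (N-1)).filter (fun p => p.2 ⊆ Λ.erase p.1) with hPdef
  -- per-pair integrability and value
  have main : ∀ p ∈ P,
      Integrable (fun ω => Real.exp (-s₁ * V p.1 ω - s₂ * ∑ y ∈ p.2, V y ω)) μ ∧
      (∫ ω, Real.exp (-s₁ * V p.1 ω - s₂ * ∑ y ∈ p.2, V y ω) ∂μ) = E := by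
    rintro ⟨x, S⟩ hp
    simp only [hPdef, Finset.mem_filter, Finset.mem_product, Finset.mem_powersetCard] at hp
    obtain ⟨⟨hxΛ, hSsub, hScard⟩, hSx⟩ := hp
    have hxS : x ∉ S := fun hx => (Finset.mem_erase.mp (hSx hx)).1 rfl
    set c : α → ℝ := fun y => if y = x then -s₁ else -s₂ with hc
    set Y : α → Ω → ℝ := fun y ω => c y * V y ω with hY
    have hYmeas : ∀ y, Measurable (Y y) := fun y => (hVmeas y).const_mul (c y)
    have hYindep : iIndepFun Y μ :=
      hindep.comp (fun y v => c y * v) (fun y => measurable_id.const_mul (c y))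
    have hYint : ∀ y ∈ insert x S, Integrable (fun ω => Real.exp (1 * Y y ω)) μ := by
      intro y hy
      by_cases hyx : y = x
      · subst hyx
        simpa [hY, hc, one_mul] using (key y s₁ hs₁).1
      · simpa [hY, hc, hyx, one_mul] using (key y s₂ hs₂).1
    have hsumint : Integrable (fun ω => Real.exp (1 * (∑ y ∈ insert x S, Y y) ω)) μ :=
      hYindep.integrable_exp_mul_sum hYmeas hYint
    have hfg : (fun ω => Real.exp (-s₁ * V x ω - s₂ * ∑ y ∈ S, V y ω))
        = fun ω => Real.exp (1 * (∑ y ∈ insert x S, Y y) ω) := by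
      funext ω
      have hS : ∀ y ∈ S, Y y ω = -s₂ * V y ω := by
        intro y hy
        have : y ≠ x := ne_of_mem_of_not_mem hy hxS
        simp [hY, hc, this]
      congr 1
      rw [one_mul, Finset.sum_apply, Finset.sum_insert hxS,
        Finset.sum_congr rfl hS]
      have hYx : Y x ω = -s₁ * V x ω := by simp [hY, hc]
      rw [hYx, ← Finset.mul_sum]
      ring
    have hmgf : ∀ y ∈ insert x S, mgf (Y y) μ 1
        = if y = x then Real.exp (G s₁) else Real.exp (G s₂) := by
      intro y hy
      by_cases hyx : y = x
      · subst hyx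
        rw [if_pos rfl, ← (key y s₁ hs₁).2]
        unfold mgf
        congr 1; funext ω; simp [hY, hc]
      · rw [if_neg hyx, ← (key y s₂ hs₂).2]
        unfold mgf
        congr 1; funext ω; simp [hY, hc, hyx]
    have hval : (∫ ω, Real.exp (1 * (∑ y ∈ insert x S, Y y) ω) ∂μ) = E := by
      have hm : (∫ ω, Real.exp (1 * (∑ y ∈ insert x S, Y y) ω) ∂μ)
          = mgf (∑ y ∈ insert x S, Y y) μ 1 := rfl
      rw [hm, hYindep.mgf_sum hYmeas, Finset.prod_congr rfl hmgf,
        Finset.prod_insert hxS, if_pos rfl]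
      have hSprod : (∏ y ∈ S, if y = x then Real.exp (G s₁) else Real.exp (G s₂))
          = Real.exp (G s₂) ^ S.card := by
        rw [Finset.prod_congr rfl (fun y hy => if_neg (ne_of_mem_of_not_mem hy hxS)),
          Finset.prod_const]
      rw [hSprod, hScard, hEdef, ← Real.exp_nat_mul, ← Real.exp_add]
      congr 2
      rw [Nat.cast_sub (by omega : 1 ≤ N)]
      norm_num
    refine ⟨?_, ?_⟩
    · rw [hfg]; exact hsumint
    · rw [hfg]; exact hval
  -- a.e. pointwise bound
  have hae : ∀ᵐ ω ∂μ, Real.exp (-(1 - h * (N - 1 : ℝ)) * t * V (X ω) ω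
        - h * t * ∑ y ∈ W ω, V y ω)
      ≤ ∑ p ∈ P, Real.exp (-s₁ * V p.1 ω - s₂ * ∑ y ∈ p.2, V y ω) := by
    filter_upwards [hsel] with ω hω
    obtain ⟨hXΛ, hWsub, hWcard, -, -⟩ := hω
    have hpP : (X ω, W ω) ∈ P := by
      simp only [hPdef, Finset.mem_filter, Finset.mem_product, Finset.mem_powersetCard]
      exact ⟨⟨hXΛ, hWsub.trans (Finset.erase_subset _ _), hWcard⟩, hWsub⟩
    have hle := Finset.single_le_sum
      (f := fun p : α × Finset α => Real.exp (-s₁ * V p.1 ω - s₂ * ∑ y ∈ p.2, V y ω))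
      (fun p _ => (Real.exp_pos _).le) hpP
    have harg : -(1 - h * (N - 1 : ℝ)) * t * V (X ω) ω - h * t * ∑ y ∈ W ω, V y ω
        = -s₁ * V (X ω) ω - s₂ * ∑ y ∈ W ω, V y ω := by
      rw [hs₁def, hs₂def]; ring
    rw [harg]
    exact hle
  have hPcard : (P.card : ℝ) ≤ (Λ.card : ℝ) * (Λ.card.choose (N-1) : ℝ) := by
    have : P.card ≤ Λ.card * Λ.card.choose (N-1) := by
      calc P.card ≤ (Λ ×ˢ Λ.powersetCard (N-1)).card := Finset.card_filter_le _ _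
        _ = Λ.card * (Λ.powersetCard (N-1)).card := Finset.card_product _ _
        _ = Λ.card * Λ.card.choose (N-1) := by rw [Finset.card_powersetCard]
    exact_mod_cast this
  calc (∫ ω, Real.exp (-(1 - h * (N - 1 : ℝ)) * t * V (X ω) ω
          - h * t * ∑ y ∈ W ω, V y ω) ∂μ)
      ≤ ∫ ω, ∑ p ∈ P, Real.exp (-s₁ * V p.1 ω - s₂ * ∑ y ∈ p.2, V y ω) ∂μ :=
        integral_mono_of_nonneg (Filter.Eventually.of_forall fun ω => (Real.exp_pos _).le)
          (integrable_finset_sum P fun p hp => (main p hp).1) hae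
    _ = ∑ p ∈ P, ∫ ω, Real.exp (-s₁ * V p.1 ω - s₂ * ∑ y ∈ p.2, V y ω) ∂μ :=
        integral_finset_sum P fun p hp => (main p hp).1
    _ = ∑ _p ∈ P, E := Finset.sum_congr rfl fun p hp => (main p hp).2
    _ = (P.card : ℝ) * E := by rw [Finset.sum_const, nsmul_eq_mul]
    _ ≤ (Λ.card : ℝ) * (Λ.card.choose (N-1) : ℝ) * E :=
        mul_le_mul_of_nonneg_right hPcard (Real.exp_pos _).le
end

section
/- Let Λ ⊂ ℤ^d be a finite box, and let {V(x)}_{x∈Λ} be i.i.d. real random variables with G(t) = log E[exp(−tV(0))] < ∞. Let E₁(H_Λ^D) denote the smallest eigenvalue of H_Λ^D = −Δ_Λ^D + V on ℓ²(Λ). Then for every probability measure p on Λ, E[exp(−t E₁(H_Λ^D))] ≥ exp( −t (√p, −Δ_Λ^D √p) + ∑_{x∈Λ} G(t p(x)) ). -/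
open MeasureTheory ProbabilityTheory

/-- The ground state energy of `H_Λ^D = -Δ_Λ^D + V` on `ℓ²(Λ)`, characterized by the
Rayleigh–Ritz variational principle. -/
noncomputable def groundStateEnergy {d : ℕ} (Λ : Finset (Fin d → ℤ))
    (V : (Fin d → ℤ) → ℝ) : ℝ :=
  sInf {r : ℝ | ∃ f : (Fin d → ℤ) → ℝ, (∀ x ∉ Λ, f x = 0) ∧
    (∑ x ∈ Λ, (f x) ^ 2 = 1) ∧
    r = dEnergy Λ f + ∑ x ∈ Λ, V x * (f x) ^ 2}

-- helpers
lemma dEnergy_nonneg {d : ℕ} (U : Finset (Fin d → ℤ)) (f : (Fin d → ℤ) → ℝ) :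
    0 ≤ dEnergy U f := by
  unfold dEnergy
  have h1 : (0:ℝ) ≤ ∑ x ∈ U, ∑ i : Fin d, ∑ s : Bool,
      if nbr x i s ∈ U then (f x - f (nbr x i s)) ^ 2 else 0 := by
    refine Finset.sum_nonneg fun x _ => Finset.sum_nonneg fun i _ =>
      Finset.sum_nonneg fun s _ => ?_
    split_ifs <;> positivity
  have h2 : (0:ℝ) ≤ ∑ x ∈ U, ∑ i : Fin d, ∑ s : Bool,
      if nbr x i s ∈ U then 0 else (f x) ^ 2 := by
    refine Finset.sum_nonneg fun x _ => Finset.sum_nonneg fun i _ =>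
      Finset.sum_nonneg fun s _ => ?_
    split_ifs <;> positivity
  linarith

def gsSet {d : ℕ} (Λ : Finset (Fin d → ℤ)) (V : (Fin d → ℤ) → ℝ) : Set ℝ :=
  {r : ℝ | ∃ f : (Fin d → ℤ) → ℝ, (∀ x ∉ Λ, f x = 0) ∧
    (∑ x ∈ Λ, (f x) ^ 2 = 1) ∧
    r = dEnergy Λ f + ∑ x ∈ Λ, V x * (f x) ^ 2}

lemma gs_eq {d : ℕ} (Λ : Finset (Fin d → ℤ)) (V : (Fin d → ℤ) → ℝ) :
    groundStateEnergy Λ V = sInf (gsSet Λ V) := rfl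

lemma gsSet_nonempty {d : ℕ} {Λ : Finset (Fin d → ℤ)} {x₀ : Fin d → ℤ} (hx₀ : x₀ ∈ Λ)
    (V : (Fin d → ℤ) → ℝ) : (gsSet Λ V).Nonempty := by
  refine ⟨_, fun x => if x = x₀ then 1 else 0, fun x hx => ?_, ?_, rfl⟩
  · simp only [ite_eq_right_iff]; rintro rfl; exact absurd hx₀ hx
  · have : ∀ x, ((if x = x₀ then (1:ℝ) else 0)) ^ 2 = if x = x₀ then 1 else 0 := by
      intro x; split_ifs <;> simp
    simp only [this, Finset.sum_ite_eq', hx₀, if_pos]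

lemma gsSet_bddBelow {d : ℕ} (Λ : Finset (Fin d → ℤ)) (V : (Fin d → ℤ) → ℝ) :
    BddBelow (gsSet Λ V) := by
  refine ⟨-∑ x ∈ Λ, |V x|, ?_⟩
  rintro r ⟨f, h0, h1, rfl⟩
  have hfx : ∀ x ∈ Λ, (f x) ^ 2 ≤ 1 := by
    intro x hx
    calc (f x) ^ 2 ≤ ∑ y ∈ Λ, (f y) ^ 2 :=
          Finset.single_le_sum (fun y _ => sq_nonneg (f y)) hx
      _ = 1 := h1
  have : -∑ x ∈ Λ, |V x| ≤ ∑ x ∈ Λ, V x * (f x) ^ 2 := by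
    rw [← Finset.sum_neg_distrib]
    refine Finset.sum_le_sum fun x hx => ?_
    have h2 : -(|V x|) * (f x)^2 ≤ V x * (f x)^2 :=
      mul_le_mul_of_nonneg_right (neg_abs_le (V x)) (sq_nonneg _)
    have h3 : -(|V x|) ≤ -(|V x|) * (f x)^2 := by
      nlinarith [abs_nonneg (V x), sq_nonneg (f x), hfx x hx]
    linarith
  have := dEnergy_nonneg Λ f
  linarith

lemma gs_le {d : ℕ} (Λ : Finset (Fin d → ℤ)) (V : (Fin d → ℤ) → ℝ)
    {f : (Fin d → ℤ) → ℝ} (h0 : ∀ x ∉ Λ, f x = 0) (h1 : ∑ x ∈ Λ, (f x) ^ 2 = 1) :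
    groundStateEnergy Λ V ≤ dEnergy Λ f + ∑ x ∈ Λ, V x * (f x) ^ 2 :=
  csInf_le (gsSet_bddBelow Λ V) ⟨f, h0, h1, rfl⟩

lemma gs_ge_inf {d : ℕ} {Λ : Finset (Fin d → ℤ)} (hΛ : Λ.Nonempty)
    {x₀ : Fin d → ℤ} (hx₀ : x₀ ∈ Λ) (V : (Fin d → ℤ) → ℝ) :
    Λ.inf' hΛ V ≤ groundStateEnergy Λ V := by
  rw [gs_eq]
  refine le_csInf (gsSet_nonempty hx₀ V) ?_
  rintro r ⟨f, h0, h1, rfl⟩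
  have : Λ.inf' hΛ V = ∑ x ∈ Λ, Λ.inf' hΛ V * (f x) ^ 2 := by
    rw [← Finset.mul_sum, h1, mul_one]
  have h2 : ∑ x ∈ Λ, Λ.inf' hΛ V * (f x) ^ 2 ≤ ∑ x ∈ Λ, V x * (f x) ^ 2 :=
    Finset.sum_le_sum fun x hx =>
      mul_le_mul_of_nonneg_right (Finset.inf'_le V hx) (sq_nonneg _)
  have := dEnergy_nonneg Λ f
  linarith

lemma gs_lip {d : ℕ} {Λ : Finset (Fin d → ℤ)} {x₀ : Fin d → ℤ} (hx₀ : x₀ ∈ Λ)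
    (V W : (Fin d → ℤ) → ℝ) :
    groundStateEnergy Λ V ≤ groundStateEnergy Λ W + ∑ x ∈ Λ, |V x - W x| := by
  rw [gs_eq, gs_eq]
  rw [← sub_le_iff_le_add]
  refine le_csInf (gsSet_nonempty hx₀ W) ?_
  rintro r ⟨f, h0, h1, rfl⟩
  rw [sub_le_iff_le_add]
  have hfx : ∀ x ∈ Λ, (f x) ^ 2 ≤ 1 := fun x hx => by
    calc (f x) ^ 2 ≤ ∑ y ∈ Λ, (f y) ^ 2 :=
          Finset.single_le_sum (fun y _ => sq_nonneg (f y)) hx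
      _ = 1 := h1
  have key : ∑ x ∈ Λ, V x * (f x)^2 ≤ ∑ x ∈ Λ, W x * (f x)^2 + ∑ x ∈ Λ, |V x - W x| := by
    rw [← Finset.sum_add_distrib]
    refine Finset.sum_le_sum fun x hx => ?_
    have h2 : (V x - W x) * (f x)^2 ≤ |V x - W x| := by
      calc (V x - W x) * (f x)^2 ≤ |V x - W x| * (f x)^2 :=
            mul_le_mul_of_nonneg_right (le_abs_self _) (sq_nonneg _)
        _ ≤ |V x - W x| * 1 :=
            mul_le_mul_of_nonneg_left (hfx x hx) (abs_nonneg _)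
        _ = |V x - W x| := mul_one _
    nlinarith [h2]
  calc sInf (gsSet Λ V) ≤ dEnergy Λ f + ∑ x ∈ Λ, V x * (f x)^2 :=
        csInf_le (gsSet_bddBelow Λ V) ⟨f, h0, h1, rfl⟩
    _ ≤ dEnergy Λ f + ∑ x ∈ Λ, W x * (f x)^2 + ∑ x ∈ Λ, |V x - W x| := by linarith

lemma gs_congr {d : ℕ} (Λ : Finset (Fin d → ℤ)) {V W : (Fin d → ℤ) → ℝ}
    (h : ∀ x ∈ Λ, V x = W x) : groundStateEnergy Λ V = groundStateEnergy Λ W := by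
  unfold groundStateEnergy
  congr 1
  ext r
  constructor
  · rintro ⟨f, h0, h1, rfl⟩
    exact ⟨f, h0, h1, by rw [Finset.sum_congr rfl fun x hx => by rw [h x hx]]⟩
  · rintro ⟨f, h0, h1, rfl⟩
    exact ⟨f, h0, h1, by rw [Finset.sum_congr rfl fun x hx => by rw [← h x hx]]⟩

lemma gs_measurable {Ω : Type*} [MeasurableSpace Ω] {d : ℕ} (Λ : Finset (Fin d → ℤ))
    {x₀ : Fin d → ℤ} (hx₀ : x₀ ∈ Λ) (V : (Fin d → ℤ) → Ω → ℝ)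
    (hVmeas : ∀ x, Measurable (V x)) :
    Measurable (fun ω => groundStateEnergy Λ (fun x => V x ω)) := by
  set F : ((↥Λ) → ℝ) → ℝ := fun v =>
    groundStateEnergy Λ (fun x => if h : x ∈ Λ then v ⟨x, h⟩ else 0) with hF
  have hlip : LipschitzWith (Λ.card) F := by
    refine LipschitzWith.of_dist_le_mul fun v w => ?_
    have hsum : ∀ (a b : (↥Λ) → ℝ),
        F a - F b ≤ (Λ.card : ℝ) * dist a b := by
      intro a b
      have h1 := gs_lip hx₀ (fun x => if h : x ∈ Λ then a ⟨x, h⟩ else 0)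
        (fun x => if h : x ∈ Λ then b ⟨x, h⟩ else 0)
      have h2 : ∑ x ∈ Λ, |(if h : x ∈ Λ then a ⟨x, h⟩ else 0) -
          (if h : x ∈ Λ then b ⟨x, h⟩ else 0)| ≤ (Λ.card : ℝ) * dist a b := by
        rw [← Finset.sum_attach Λ (fun x => |(if h : x ∈ Λ then a ⟨x, h⟩ else 0) -
          (if h : x ∈ Λ then b ⟨x, h⟩ else 0)|)]
        have h3 : ∀ x : ↥Λ, |(if h : (x:Fin d → ℤ) ∈ Λ then a ⟨x, h⟩ else 0) -
            (if h : (x:Fin d → ℤ) ∈ Λ then b ⟨x, h⟩ else 0)| ≤ dist a b := by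
          intro x
          rw [dif_pos x.2, dif_pos x.2, ← Real.dist_eq]
          exact le_trans (by exact le_of_eq (by congr)) (dist_le_pi_dist a b ⟨x, x.2⟩)
        have := Finset.sum_le_card_nsmul Λ.attach _ (dist a b) (fun x _ => h3 x)
        simpa [Finset.card_attach, nsmul_eq_mul] using this
      rw [sub_le_iff_le_add]
      calc F a ≤ F b + ∑ x ∈ Λ, |(if h : x ∈ Λ then a ⟨x, h⟩ else 0) -
            (if h : x ∈ Λ then b ⟨x, h⟩ else 0)| := h1
        _ ≤ F b + (Λ.card : ℝ) * dist a b := by linarith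
        _ = (Λ.card : ℝ) * dist a b + F b := by ring
    rw [Real.dist_eq, abs_sub_le_iff]
    constructor
    · simpa using hsum v w
    · have := hsum w v
      rw [dist_comm] at this
      simpa using this
  have hcont : Continuous F := hlip.continuous
  have hW : Measurable (fun ω (x : ↥Λ) => V x ω) :=
    measurable_pi_lambda _ fun x => hVmeas x
  have heq : (fun ω => groundStateEnergy Λ (fun x => V x ω)) =
      F ∘ (fun ω (x : ↥Λ) => V x ω) := by
    funext ω
    exact (gs_congr Λ fun x hx => by rw [dif_pos hx]).symm
  rw [heq]
  exact hcont.measurable.comp hW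

/-- Lemma 2.2: for an i.i.d. random potential on a finite box `Λ ⊂ ℤ^d` with cumulant
generating function `G`, and any probability measure `p` on `Λ`,
`E[exp(-t E₁(H_Λ^D))] ≥ exp(-t (√p, -Δ_Λ^D √p) + ∑_{x∈Λ} G(t p x))`. -/
theorem stmt_17 {Ω : Type*} [MeasurableSpace Ω] (μ : Measure Ω) [IsProbabilityMeasure μ]
    {d : ℕ} (hd : 1 ≤ d) (Λ : Finset (Fin d → ℤ)) (hΛ : Λ.Nonempty)
    (V : (Fin d → ℤ) → Ω → ℝ) (hVmeas : ∀ x, Measurable (V x))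
    (hindep : iIndepFun V μ)
    (hid : ∀ x y, Measure.map (V x) μ = Measure.map (V y) μ)
    (x₀ : Fin d → ℤ) (hx₀ : x₀ ∈ Λ)
    (hInt : ∀ s : ℝ, 0 ≤ s → Integrable (fun ω => Real.exp (-s * V x₀ ω)) μ)
    (G : ℝ → ℝ) (hG : ∀ s : ℝ, G s = Real.log (∫ ω, Real.exp (-s * V x₀ ω) ∂μ))
    (t : ℝ) (ht : 0 ≤ t)
    (p : (Fin d → ℤ) → ℝ) (hp0 : ∀ x, 0 ≤ p x) (hpsupp : ∀ x ∉ Λ, p x = 0)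
    (hp1 : ∑ x ∈ Λ, p x = 1) :
    Real.exp (-t * dEnergy Λ (fun x => Real.sqrt (p x)) + ∑ x ∈ Λ, G (t * p x))
      ≤ ∫ ω, Real.exp (-t * groundStateEnergy Λ (fun x => V x ω)) ∂μ := by
  classical
  set q : (Fin d → ℤ) → Ω → ℝ := fun x ω => Real.exp (-(t * p x) * V x ω) with hqdef
  have hqm : ∀ x, Measurable (q x) := fun x => ((hVmeas x).const_mul (-(t * p x))).exp
  have hq0 : ∀ x ω, 0 ≤ q x ω := fun x ω => (Real.exp_pos _).le
  -- independence of the composed family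
  have hqind : iIndepFun q μ :=
    hindep.comp (fun x r => Real.exp (-(t * p x) * r))
      (fun x => (measurable_id.const_mul (-(t * p x))).exp)
  -- product factorization
  have hprodint : ∀ s : Finset (Fin d → ℤ),
      (∫ ω, ∏ x ∈ s, q x ω ∂μ) = ∏ x ∈ s, ∫ ω, q x ω ∂μ := by
    intro s
    induction s using Finset.induction with
    | empty => simp
    | @insert a s ha ih =>
      have hdep : IndepFun (∏ j ∈ s, q j) (q a) μ :=
        hqind.indepFun_finset_prod_of_notMem hqm ha
      have hprodnn : 0 ≤ (∏ j ∈ s, q j) := by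
        intro ω
        rw [Finset.prod_apply]
        exact Finset.prod_nonneg fun x _ => hq0 x ω
      have hprodm : Measurable (∏ j ∈ s, q j) := by
        have : (∏ j ∈ s, q j) = fun ω => ∏ j ∈ s, q j ω := by
          funext ω; rw [Finset.prod_apply]
        rw [this]
        exact Finset.measurable_prod _ fun x _ => hqm x
      have hmul := hdep.integral_mul_eq_mul_integral
        hprodm.aestronglyMeasurable (hqm a).aestronglyMeasurable
      calc ∫ ω, ∏ x ∈ insert a s, q x ω ∂μ
          = ∫ ω, (∏ x ∈ s, q x ω) * q a ω ∂μ := by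
            congr 1; funext ω; rw [Finset.prod_insert ha]; ring
        _ = (∫ ω, ∏ x ∈ s, q x ω ∂μ) * ∫ ω, q a ω ∂μ := by
            have h2 : (fun ω => (∏ x ∈ s, q x ω) * q a ω) = (∏ j ∈ s, q j) * q a := by
              funext ω; rw [Pi.mul_apply, Finset.prod_apply]
            rw [h2]
            have h3 : (∫ ω, ∏ x ∈ s, q x ω ∂μ) = integral μ (∏ j ∈ s, q j) := by
              congr 1; funext ω; rw [Finset.prod_apply]
            rw [h3, hmul]
        _ = ∏ x ∈ insert a s, ∫ ω, q x ω ∂μ := by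
            rw [Finset.prod_insert ha, ih]; ring
  -- transfer integrals from x to x₀
  have hmeasexp : ∀ s : ℝ, Measurable (fun r : ℝ => Real.exp (-s * r)) :=
    fun s => (measurable_id.const_mul (-s)).exp
  have hVinteq : ∀ (s : ℝ) (x : Fin d → ℤ),
      ∫ ω, Real.exp (-s * V x ω) ∂μ = ∫ ω, Real.exp (-s * V x₀ ω) ∂μ := by
    intro s x
    have h1 : ∫ ω, Real.exp (-s * V x ω) ∂μ
        = ∫ r, Real.exp (-s * r) ∂(Measure.map (V x) μ) :=
      (integral_map (hVmeas x).aemeasurable (hmeasexp s).aestronglyMeasurable).symm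
    have h2 : ∫ ω, Real.exp (-s * V x₀ ω) ∂μ
        = ∫ r, Real.exp (-s * r) ∂(Measure.map (V x₀) μ) :=
      (integral_map (hVmeas x₀).aemeasurable (hmeasexp s).aestronglyMeasurable).symm
    rw [h1, h2, hid x x₀]
  have hVint : ∀ (s : ℝ), 0 ≤ s → ∀ x, Integrable (fun ω => Real.exp (-s * V x ω)) μ := by
    intro s hs x
    have h1 : Integrable ((fun r => Real.exp (-s * r)) ∘ V x) μ ↔
        Integrable (fun r => Real.exp (-s * r)) (Measure.map (V x) μ) :=
      (integrable_map_measure (hmeasexp s).aestronglyMeasurable (hVmeas x).aemeasurable).symm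
    have h2 : Integrable ((fun r => Real.exp (-s * r)) ∘ V x₀) μ ↔
        Integrable (fun r => Real.exp (-s * r)) (Measure.map (V x₀) μ) :=
      (integrable_map_measure (hmeasexp s).aestronglyMeasurable (hVmeas x₀).aemeasurable).symm
    have : Integrable ((fun r => Real.exp (-s * r)) ∘ V x) μ := by
      rw [h1, hid x x₀, ← h2]
      exact hInt s hs
    exact this
  -- positivity of the mgf, and exp (G s) value
  have hGexp : ∀ s : ℝ, 0 ≤ s → Real.exp (G s) = ∫ ω, Real.exp (-s * V x₀ ω) ∂μ := by
    intro s hs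
    have hpos : 0 < ∫ ω, Real.exp (-s * V x₀ ω) ∂μ := by
      rw [integral_pos_iff_support_of_nonneg (fun ω => (Real.exp_pos _).le) (hInt s hs)]
      have : Function.support (fun ω => Real.exp (-s * V x₀ ω)) = Set.univ :=
        Set.eq_univ_of_forall fun ω => (Real.exp_pos _).ne'
      rw [this]
      simp
    rw [hG s, Real.exp_log hpos]
  have hqint : ∀ x ∈ Λ, (∫ ω, q x ω ∂μ) = Real.exp (G (t * p x)) := by
    intro x hx
    rw [hGexp (t * p x) (mul_nonneg ht (hp0 x)), hqdef]
    exact hVinteq (t * p x) x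
  -- the trial function √p
  have hsq : ∀ x, (Real.sqrt (p x)) ^ 2 = p x := fun x => Real.sq_sqrt (hp0 x)
  have hgsle : ∀ ω, groundStateEnergy Λ (fun x => V x ω)
      ≤ dEnergy Λ (fun x => Real.sqrt (p x)) + ∑ x ∈ Λ, V x ω * p x := by
    intro ω
    have h := gs_le Λ (fun x => V x ω)
      (f := fun x => Real.sqrt (p x))
      (fun x hx => by show Real.sqrt (p x) = 0; rw [hpsupp x hx]; exact Real.sqrt_zero)
      (by rw [Finset.sum_congr rfl fun x _ => hsq x, hp1])
    calc groundStateEnergy Λ (fun x => V x ω)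
        ≤ dEnergy Λ (fun x => Real.sqrt (p x))
          + ∑ x ∈ Λ, V x ω * (Real.sqrt (p x)) ^ 2 := h
      _ = dEnergy Λ (fun x => Real.sqrt (p x)) + ∑ x ∈ Λ, V x ω * p x := by
          rw [Finset.sum_congr rfl fun x _ => by rw [hsq x]]
  -- pointwise inequality
  have hpt : ∀ ω, Real.exp (-t * dEnergy Λ (fun x => Real.sqrt (p x))) * ∏ x ∈ Λ, q x ω
      ≤ Real.exp (-t * groundStateEnergy Λ (fun x => V x ω)) := by
    intro ω
    have h1 : (∏ x ∈ Λ, q x ω) = Real.exp (∑ x ∈ Λ, -(t * p x) * V x ω) := by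
      rw [Real.exp_sum]
    rw [h1, ← Real.exp_add, Real.exp_le_exp]
    have h2 : (∑ x ∈ Λ, -(t * p x) * V x ω) = -t * ∑ x ∈ Λ, V x ω * p x := by
      rw [Finset.mul_sum]
      exact Finset.sum_congr rfl fun x _ => by ring
    rw [h2]
    have h3 := hgsle ω
    nlinarith [h3, ht]
  -- integrability of the upper function
  have hgsmeas : Measurable (fun ω => groundStateEnergy Λ (fun x => V x ω)) :=
    gs_measurable Λ hx₀ V hVmeas
  have hfmeas : Measurable (fun ω => Real.exp (-t * groundStateEnergy Λ (fun x => V x ω))) :=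
    (hgsmeas.const_mul (-t)).exp
  have hdom : ∀ ω, Real.exp (-t * groundStateEnergy Λ (fun x => V x ω))
      ≤ ∑ x ∈ Λ, Real.exp (-t * V x ω) := by
    intro ω
    obtain ⟨y, hy, hyeq⟩ := Finset.exists_mem_eq_inf' hΛ (fun x => V x ω)
    have h1 : Λ.inf' hΛ (fun x => V x ω) ≤ groundStateEnergy Λ (fun x => V x ω) :=
      gs_ge_inf hΛ hx₀ (fun x => V x ω)
    have h2 : Real.exp (-t * groundStateEnergy Λ (fun x => V x ω))
        ≤ Real.exp (-t * V y ω) := by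
      rw [Real.exp_le_exp]
      rw [hyeq] at h1
      nlinarith [h1, ht]
    refine h2.trans ?_
    exact Finset.single_le_sum (fun x _ => (Real.exp_pos (-t * V x ω)).le) hy
  have hhint : Integrable (fun ω => ∑ x ∈ Λ, Real.exp (-t * V x ω)) μ :=
    integrable_finset_sum Λ fun x _ => hVint t ht x
  have hfint : Integrable (fun ω => Real.exp (-t * groundStateEnergy Λ (fun x => V x ω))) μ := by
    refine hhint.mono hfmeas.aestronglyMeasurable (ae_of_all _ fun ω => ?_)
    rw [Real.norm_eq_abs, Real.norm_eq_abs, abs_of_nonneg (Real.exp_pos _).le,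
      abs_of_nonneg (Finset.sum_nonneg fun x _ => (Real.exp_pos _).le)]
    exact hdom ω
  -- main chain
  calc Real.exp (-t * dEnergy Λ (fun x => Real.sqrt (p x)) + ∑ x ∈ Λ, G (t * p x))
      = Real.exp (-t * dEnergy Λ (fun x => Real.sqrt (p x)))
        * ∏ x ∈ Λ, Real.exp (G (t * p x)) := by rw [Real.exp_add, Real.exp_sum]
    _ = Real.exp (-t * dEnergy Λ (fun x => Real.sqrt (p x)))
        * ∏ x ∈ Λ, ∫ ω, q x ω ∂μ := by
          rw [Finset.prod_congr rfl fun x hx => (hqint x hx).symm]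
    _ = Real.exp (-t * dEnergy Λ (fun x => Real.sqrt (p x)))
        * ∫ ω, ∏ x ∈ Λ, q x ω ∂μ := by rw [hprodint Λ]
    _ = ∫ ω, Real.exp (-t * dEnergy Λ (fun x => Real.sqrt (p x))) * ∏ x ∈ Λ, q x ω ∂μ := by
          rw [integral_const_mul]
    _ ≤ ∫ ω, Real.exp (-t * groundStateEnergy Λ (fun x => V x ω)) ∂μ := by
          refine integral_mono_of_nonneg (ae_of_all _ fun ω => ?_) hfint (ae_of_all _ hpt)
          exact mul_nonneg (Real.exp_pos _).le (Finset.prod_nonneg fun x _ => hq0 x ω)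
end
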